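/- Let M be an n×n real positive semi-definite matrix, θ' ∈ ℝⁿ, and D ⊆ ℝⁿ a convex set such that sup_{λ ∈ D} (θ'−λ)ᵀM(θ'−λ) ≤ B for some B > 0. Then for every α with 0 < α ≤ 1/(2B), the function λ ↦ exp(−α (θ'−λ)ᵀM(θ'−λ)) is concave on D. -/

import Mathlib

open Matrix

/-- Exp-concavity of a positive semi-definite quadratic form on a bounded convex domain:
if `(θ'−λ)ᵀM(θ'−λ) ≤ B` on `D` and `0 < α ≤ 1/(2B)`, then
`λ ↦ exp(−α (θ'−λ)ᵀM(θ'−λ))` is concave on `D`. -/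
theorem exp_neg_quadform_concaveOn (n : ℕ)
    (M : Matrix (Fin n) (Fin n) ℝ) (hM : M.PosSemidef)
    (θ' : Fin n → ℝ) (D : Set (Fin n → ℝ)) (hD : Convex ℝ D)
    (B : ℝ) (hB : 0 < B)
    (hbound : ∀ l ∈ D, (θ' - l) ⬝ᵥ M.mulVec (θ' - l) ≤ B)
    (α : ℝ) (hα0 : 0 < α) (hα : α ≤ 1 / (2 * B)) :
    ConcaveOn ℝ D fun l => Real.exp (-α * ((θ' - l) ⬝ᵥ M.mulVec (θ' - l))) := by
  obtain ⟨C, hC⟩ : ∃ C : Matrix (Fin n) (Fin n) ℝ, M = Cᴴ * C := by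
    open scoped MatrixOrder Matrix.Norms.L2Operator in
    obtain ⟨C, hC⟩ := CStarAlgebra.nonneg_iff_eq_star_mul_self.mp hM.nonneg
    exact ⟨C, hC⟩
  have hCt : Cᴴ = Cᵀ := by
    ext i j; simp [Matrix.conjTranspose_apply, Matrix.transpose_apply]
  have hbil : ∀ w v : Fin n → ℝ, w ⬝ᵥ M.mulVec v = (C *ᵥ w) ⬝ᵥ (C *ᵥ v) := by
    intro w v
    rw [hC, hCt, ← Matrix.mulVec_mulVec, Matrix.dotProduct_mulVec,
      Matrix.vecMul_transpose]
  have hCS : ∀ w v : Fin n → ℝ,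
      ((C *ᵥ w) ⬝ᵥ (C *ᵥ v)) ^ 2 ≤ ((C *ᵥ w) ⬝ᵥ (C *ᵥ w)) * ((C *ᵥ v) ⬝ᵥ (C *ᵥ v)) := by
    intro w v
    simpa [dotProduct, sq, mul_comm] using
      Finset.sum_mul_sq_le_sq_mul_sq Finset.univ (C *ᵥ w) (C *ᵥ v)
  have hself : ∀ v : Fin n → ℝ, 0 ≤ (C *ᵥ v) ⬝ᵥ (C *ᵥ v) := fun v =>
    Finset.sum_nonneg fun i _ => mul_self_nonneg _
  refine ⟨hD, ?_⟩
  intro x hx y hy a b ha hb hab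
  -- set up notation along the segment
  set u : Fin n → ℝ := θ' - x with hu
  set d : Fin n → ℝ := y - x with hd
  set a0 : ℝ := (C *ᵥ d) ⬝ᵥ (C *ᵥ d) with ha0
  set b0 : ℝ := (C *ᵥ u) ⬝ᵥ (C *ᵥ d) with hb0
  set c0 : ℝ := (C *ᵥ u) ⬝ᵥ (C *ᵥ u) with hc0
  set p : ℝ → ℝ := fun s => c0 - 2 * b0 * s + a0 * s ^ 2 with hp
  set φ : ℝ → ℝ := fun s => Real.exp (-α * p s) with hφ
  have ha0nn : 0 ≤ a0 := hself d
  -- the quadratic form along the segment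
  have hseg : ∀ s : ℝ, (θ' - (x + s • d)) = u - s • d := by
    intro s; funext i; simp [hu, hd]; ring
  have hq : ∀ s : ℝ, (θ' - (x + s • d)) ⬝ᵥ M.mulVec (θ' - (x + s • d)) = p s := by
    intro s
    rw [hseg s, hbil]
    simp [hp, hc0, hb0, ha0, Matrix.mulVec_sub, Matrix.mulVec_smul,
      sub_dotProduct, dotProduct_sub, smul_dotProduct,
      dotProduct_smul, dotProduct_comm (C *ᵥ d) (C *ᵥ u), smul_eq_mul]
    ring
  -- membership of segment points in D
  have hmem : ∀ s ∈ Set.Icc (0:ℝ) 1, x + s • d ∈ D := by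
    intro s hs
    have : x + s • d = (1 - s) • x + s • y := by
      funext i; simp [hd]; ring
    rw [this]
    exact hD hx hy (by linarith [hs.1, hs.2]) hs.1 (by ring)
  -- bound on p on [0,1]
  have hpB : ∀ s ∈ Set.Icc (0:ℝ) 1, p s ≤ B := by
    intro s hs
    rw [← hq s]; exact hbound _ (hmem s hs)
  -- the key derivative bound
  have hkey : ∀ s ∈ Set.Icc (0:ℝ) 1, α ^ 2 * (2 * a0 * s - 2 * b0) ^ 2 ≤ 2 * α * a0 := by
    intro s hs
    have h1 : (2 * a0 * s - 2 * b0) ^ 2 = 4 * ((C *ᵥ (u - s • d)) ⬝ᵥ (C *ᵥ d)) ^ 2 := by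
      simp [Matrix.mulVec_sub, Matrix.mulVec_smul, sub_dotProduct,
        smul_dotProduct, smul_eq_mul, ha0, hb0]
      ring
    have h2 : ((C *ᵥ (u - s • d)) ⬝ᵥ (C *ᵥ d)) ^ 2 ≤ p s * a0 := by
      calc ((C *ᵥ (u - s • d)) ⬝ᵥ (C *ᵥ d)) ^ 2
          ≤ ((C *ᵥ (u - s • d)) ⬝ᵥ (C *ᵥ (u - s • d))) * a0 := hCS _ _
        _ = p s * a0 := by rw [← hbil, ← hseg s, hq s]
    have h3 : p s * a0 ≤ B * a0 := mul_le_mul_of_nonneg_right (hpB s hs) ha0nn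
    have hαB : α * B ≤ 1 / 2 := by
      rw [le_div_iff₀ (by positivity : (0:ℝ) < 2 * B)] at hα
      linarith
    calc α ^ 2 * (2 * a0 * s - 2 * b0) ^ 2
        = 4 * α ^ 2 * ((C *ᵥ (u - s • d)) ⬝ᵥ (C *ᵥ d)) ^ 2 := by rw [h1]; ring
      _ ≤ 4 * α ^ 2 * (B * a0) := by
          apply mul_le_mul_of_nonneg_left (le_trans h2 h3) (by positivity)
      _ = 4 * α * (α * B) * a0 := by ring
      _ ≤ 4 * α * (1 / 2) * a0 := by
          apply mul_le_mul_of_nonneg_right _ ha0nn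
          apply mul_le_mul_of_nonneg_left hαB (by positivity)
      _ = 2 * α * a0 := by ring
  -- derivatives of p and φ
  have hpd : ∀ s : ℝ, HasDerivAt p (2 * a0 * s - 2 * b0) s := by
    intro s
    have h : HasDerivAt (fun s : ℝ => c0 - 2 * b0 * s + a0 * s ^ 2)
        (0 - 2 * b0 * 1 + a0 * (2 * s ^ 1)) s := by
      exact ((hasDerivAt_const s c0).sub ((hasDerivAt_id s).const_mul (2 * b0))).add
        ((hasDerivAt_pow 2 s).const_mul a0)
    convert h using 1
    simp; ring
  have hφd : ∀ s : ℝ, HasDerivAt φ (Real.exp (-α * p s) * (-α * (2 * a0 * s - 2 * b0))) s := by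
    intro s
    exact ((hpd s).const_mul (-α)).exp
  have hφdd : ∀ s : ℝ, HasDerivAt (fun s => Real.exp (-α * p s) * (-α * (2 * a0 * s - 2 * b0)))
      (Real.exp (-α * p s) * (α ^ 2 * (2 * a0 * s - 2 * b0) ^ 2 - 2 * α * a0)) s := by
    intro s
    have h1 : HasDerivAt (fun s => Real.exp (-α * p s))
        (Real.exp (-α * p s) * (-α * (2 * a0 * s - 2 * b0))) s := ((hpd s).const_mul (-α)).exp
    have h2 : HasDerivAt (fun s : ℝ => -α * (2 * a0 * s - 2 * b0)) (-α * (2 * a0)) s := by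
      have : HasDerivAt (fun s : ℝ => 2 * a0 * s - 2 * b0) (2 * a0) s := by
        simpa using ((hasDerivAt_id s).const_mul (2 * a0)).sub_const (2 * b0)
      exact this.const_mul (-α)
    have := h1.fun_mul h2
    exact this.congr_deriv (by ring)
  -- concavity of φ on [0,1]
  have hφconc : ConcaveOn ℝ (Set.Icc (0:ℝ) 1) φ := by
    apply concaveOn_of_hasDerivWithinAt2_nonpos (convex_Icc 0 1)
      (f' := fun s => Real.exp (-α * p s) * (-α * (2 * a0 * s - 2 * b0)))
      (f'' := fun s => Real.exp (-α * p s) * (α ^ 2 * (2 * a0 * s - 2 * b0) ^ 2 - 2 * α * a0))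
    · exact fun s _ => (hφd s).continuousAt.continuousWithinAt
    · exact fun s _ => (hφd s).hasDerivWithinAt
    · exact fun s _ => (hφdd s).hasDerivWithinAt
    · intro s hs
      rw [interior_Icc] at hs
      have hs' : s ∈ Set.Icc (0:ℝ) 1 := ⟨le_of_lt hs.1, le_of_lt hs.2⟩
      have := hkey s hs'
      have he : 0 < Real.exp (-α * p s) := Real.exp_pos _
      nlinarith [Real.exp_pos (-α * p s)]
  -- conclude
  have h01 : (0:ℝ) ∈ Set.Icc (0:ℝ) 1 := by constructor <;> norm_num
  have h11 : (1:ℝ) ∈ Set.Icc (0:ℝ) 1 := by constructor <;> norm_num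
  have := hφconc.2 h01 h11 ha hb hab
  have hb1 : a • (0:ℝ) + b • (1:ℝ) = b := by simp
  rw [hb1] at this
  have hx0 : Real.exp (-α * ((θ' - x) ⬝ᵥ M.mulVec (θ' - x))) = φ 0 := by
    have := hq 0
    simp at this
    simp [hφ, ← this]
  have hy1 : Real.exp (-α * ((θ' - y) ⬝ᵥ M.mulVec (θ' - y))) = φ 1 := by
    have h := hq 1
    have : x + (1:ℝ) • d = y := by funext i; simp [hd]
    rw [this] at h
    simp [hφ, ← h]
  have hz : Real.exp (-α * ((θ' - (a • x + b • y)) ⬝ᵥ M.mulVec (θ' - (a • x + b • y)))) = φ b := by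
    have hxy : a • x + b • y = x + b • d := by
      funext i
      have : a = 1 - b := by linarith
      simp [hd, this]; ring
    rw [hxy]
    simp [hφ, ← hq b]
  simp only [smul_eq_mul] at this ⊢
  rw [hx0, hy1, hz]
  exact this
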